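/- Let 0 < α < 1 and define u : ℝ → ℝ by u(t) = ∑_{k=0}^∞ (−1)^k t^(k(1−α)) / Γ(1 + k(1−α)) for t ≥ 0 (so u(t) = E_{1−α}(−t^(1−α))). Then for every t > 0, u′(t) = −(1/Γ(1−α)) · d/dt [ ∫₀ᵗ (t−τ)^(−α) u(τ) dτ ], i.e. u′(t) equals the negative of the Riemann–Liouville fractional derivative of order α of u at t. -/

import Mathlib

open Real MeasureTheory

/-- `u t = E_{1-α}(-t^(1-α)) = ∑ₖ (-1)^k t^(k(1-α)) / Γ(1 + k(1-α))`. -/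
noncomputable def mlCos (α : ℝ) : ℝ → ℝ :=
  fun t => ∑' k : ℕ,
    (-1 : ℝ) ^ k * t ^ ((k : ℝ) * (1 - α)) / Real.Gamma (1 + (k : ℝ) * (1 - α))

/-- Lower bound for the Gamma ratio, from log-convexity. -/
lemma gamma_lb {ν a : ℝ} (hν0 : 0 < ν) (hν1 : ν ≤ 1) (ha : 1 < a) :
    Real.Gamma a * (a - 1 + ν) ^ ν ≤ Real.Gamma (a + ν) := by
  have h1 : (0:ℝ) < a - 1 + ν := by linarith
  have h2 : (0:ℝ) < a + ν := by linarith
  have hg1 : 0 < Real.Gamma (a - 1 + ν) := Real.Gamma_pos_of_pos h1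
  have hg2 : 0 < Real.Gamma (a + ν) := Real.Gamma_pos_of_pos h2
  have hga : 0 < Real.Gamma a := Real.Gamma_pos_of_pos (by linarith)
  have h := Real.convexOn_log_Gamma.2 (Set.mem_Ioi.2 h1) (Set.mem_Ioi.2 h2)
    hν0.le (by linarith : (0:ℝ) ≤ 1 - ν) (by ring)
  simp only [smul_eq_mul, Function.comp] at h
  rw [show ν * (a - 1 + ν) + (1 - ν) * (a + ν) = a by ring] at h
  have hrec : Real.Gamma (a + ν) = (a - 1 + ν) * Real.Gamma (a - 1 + ν) := by
    have h3 := Real.Gamma_add_one h1.ne'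
    rw [show a - 1 + ν + 1 = a + ν by ring] at h3
    exact h3
  have hlog : Real.log (Real.Gamma (a - 1 + ν))
      = Real.log (Real.Gamma (a + ν)) - Real.log (a - 1 + ν) := by
    rw [hrec, Real.log_mul h1.ne' hg1.ne']; ring
  rw [hlog] at h
  have hpow : (0:ℝ) < (a - 1 + ν) ^ ν := Real.rpow_pos_of_pos h1 ν
  rw [← Real.log_le_log_iff (by positivity) hg2, Real.log_mul hga.ne' hpow.ne',
    Real.log_rpow h1]
  nlinarith [h]

/-- Summability of the Mittag-Leffler type series. -/
lemma ml_summable {ν : ℝ} (hν0 : 0 < ν) (hν1 : ν ≤ 1) {x : ℝ} (hx : 0 ≤ x) :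
    Summable (fun k : ℕ => x ^ ((k : ℝ) * ν) / Real.Gamma (1 + (k : ℝ) * ν)) := by
  rcases eq_or_lt_of_le hx with h0 | hx
  · apply summable_of_ne_finset_zero (s := {0})
    intro k hk
    have hk0 : k ≠ 0 := by simpa using hk
    have : (k : ℝ) * ν ≠ 0 := mul_ne_zero (Nat.cast_ne_zero.2 hk0) hν0.ne'
    rw [← h0, Real.zero_rpow this, zero_div]
  · apply summable_of_ratio_norm_eventually_le (r := 1/2) (by norm_num)
    have htend : Filter.Tendsto (fun k : ℕ => ((k : ℝ) * ν + ν) ^ ν)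
        Filter.atTop Filter.atTop := by
      apply (tendsto_rpow_atTop hν0).comp
      apply Filter.tendsto_atTop_add_const_right
      exact (tendsto_natCast_atTop_atTop (R := ℝ)).atTop_mul_const hν0
    filter_upwards [htend.eventually_ge_atTop (2 * x ^ ν),
      Filter.eventually_ge_atTop 1] with k hk hk1
    have hkν : 0 < (k : ℝ) * ν := by
      have : (1:ℝ) ≤ (k : ℝ) := by exact_mod_cast hk1
      nlinarith
    have ha : 1 < 1 + (k : ℝ) * ν := by linarith
    have key := gamma_lb hν0 hν1 ha
    rw [show 1 + (k : ℝ) * ν - 1 + ν = (k : ℝ) * ν + ν by ring] at key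
    have hA : 0 < Real.Gamma (1 + (k : ℝ) * ν) := Real.Gamma_pos_of_pos (by linarith)
    have hB : 0 < Real.Gamma (1 + ((k : ℝ) + 1) * ν) := Real.Gamma_pos_of_pos (by nlinarith)
    have hxν : 0 < x ^ ν := Real.rpow_pos_of_pos hx ν
    have hΓ : Real.Gamma (1 + (k : ℝ) * ν) * (2 * x ^ ν)
        ≤ Real.Gamma (1 + ((k : ℝ) + 1) * ν) := by
      rw [show 1 + ((k : ℝ) + 1) * ν = 1 + (k : ℝ) * ν + ν by ring]
      nlinarith [key]
    have hX : 0 ≤ x ^ ((k : ℝ) * ν) := Real.rpow_nonneg hx.le _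
    rw [Real.norm_of_nonneg (by positivity), Real.norm_of_nonneg (by positivity)]
    push_cast
    have hx1 : x ^ (((k : ℝ) + 1) * ν) = x ^ ((k : ℝ) * ν) * x ^ ν := by
      rw [← Real.rpow_add hx]; ring_nf
    rw [hx1, show (1:ℝ)/2 * (x ^ ((k : ℝ) * ν) / Real.Gamma (1 + (k : ℝ) * ν))
      = x ^ ((k : ℝ) * ν) / (2 * Real.Gamma (1 + (k : ℝ) * ν)) by ring,
      div_le_div_iff₀ hB (by positivity)]
    nlinarith [mul_le_mul_of_nonneg_left hΓ hX]

/-- The real Beta integral on `[0, s]`. -/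
lemma beta_real {p q s : ℝ} (hp : 0 < p) (hq : 0 < q) (hs : 0 < s) :
    (∫ τ in (0:ℝ)..s, τ ^ (p - 1) * (s - τ) ^ (q - 1)) =
      s ^ (p + q - 1) * (Real.Gamma p * Real.Gamma q / Real.Gamma (p + q)) := by
  have hne : Complex.Gamma ((p : ℂ) + q) ≠ 0 := by
    rw [← Complex.ofReal_add, Complex.Gamma_ofReal]
    exact_mod_cast (Real.Gamma_pos_of_pos (by linarith)).ne'
  have hB : Complex.betaIntegral p q
      = Complex.Gamma p * Complex.Gamma q / Complex.Gamma ((p : ℂ) + q) := by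
    rw [eq_div_iff hne, mul_comm]
    exact (Complex.Gamma_mul_Gamma_eq_betaIntegral
      (by simpa using hp) (by simpa using hq)).symm
  have hL : (∫ τ in (0:ℝ)..s, ((τ : ℂ) ^ ((p : ℂ) - 1) * ((s : ℂ) - τ) ^ ((q : ℂ) - 1)))
      = ((∫ τ in (0:ℝ)..s, τ ^ (p - 1) * (s - τ) ^ (q - 1) : ℝ) : ℂ) := by
    rw [← intervalIntegral.integral_ofReal]
    refine intervalIntegral.integral_congr fun τ hτ => ?_
    rw [Set.uIcc_of_le hs.le] at hτ
    rw [Complex.ofReal_mul, Complex.ofReal_cpow hτ.1,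
      Complex.ofReal_cpow (sub_nonneg.2 hτ.2)]
    push_cast
    ring
  have hC := Complex.betaIntegral_scaled (p : ℂ) (q : ℂ) hs
  rw [hL, hB] at hC
  have hsc : ((s : ℂ)) ^ ((p : ℂ) + (q : ℂ) - 1) = ((s ^ (p + q - 1) : ℝ) : ℂ) := by
    rw [Complex.ofReal_cpow hs.le]
    push_cast
    ring_nf
  rw [hsc, Complex.Gamma_ofReal, Complex.Gamma_ofReal, ← Complex.ofReal_add,
    Complex.Gamma_ofReal] at hC
  exact_mod_cast hC

lemma integrand_intervalIntegrable {c ν s : ℝ} (hc : 0 ≤ c) (hν : 0 < ν) (hs : 0 < s) :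
    IntervalIntegrable (fun τ => (s - τ) ^ (ν - 1) * τ ^ c) volume 0 s := by
  apply IntervalIntegrable.mul_continuousOn
  · have h := (intervalIntegral.intervalIntegrable_rpow'
      (show (-1:ℝ) < ν - 1 by linarith) (a := 0) (b := s)).comp_sub_left s
    simpa using h.symm
  · apply continuousOn_of_forall_continuousAt
    intro τ _
    exact Real.continuousAt_rpow_const τ c (Or.inr hc)

lemma key_integral {α : ℝ} (hα0 : 0 < α) (hα1 : α < 1) {s : ℝ} (hs : 0 < s) :
    (∫ τ in (0:ℝ)..s, (s - τ) ^ (-α) * mlCos α τ)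
      = Real.Gamma (1 - α) * (1 - mlCos α s) := by
  have hν0 : (0:ℝ) < 1 - α := by linarith
  have hν1 : (1:ℝ) - α ≤ 1 := by linarith
  have hkν : ∀ k : ℕ, (0:ℝ) ≤ (k : ℝ) * (1 - α) :=
    fun k => mul_nonneg (Nat.cast_nonneg k) hν0.le
  have hΓk : ∀ k : ℕ, 0 < Real.Gamma (1 + (k : ℝ) * (1 - α)) :=
    fun k => Real.Gamma_pos_of_pos (by linarith [hkν k])
  have hΓk' : ∀ k : ℕ, 0 < Real.Gamma (1 + ((k : ℝ) + 1) * (1 - α)) :=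
    fun k => Real.Gamma_pos_of_pos (by nlinarith [hkν k])
  -- the beta integral values
  have hbeta : ∀ k : ℕ, (∫ τ in Set.Ioc (0:ℝ) s, (s - τ) ^ (-α) * τ ^ ((k : ℝ) * (1 - α)))
      = s ^ (((k : ℝ) + 1) * (1 - α)) * (Real.Gamma (1 + (k : ℝ) * (1 - α)) *
          Real.Gamma (1 - α) / Real.Gamma (1 + ((k : ℝ) + 1) * (1 - α))) := by
    intro k
    have hb := beta_real (p := 1 + (k : ℝ) * (1 - α)) (q := 1 - α)
      (by linarith [hkν k]) hν0 hs
    rw [intervalIntegral.integral_of_le hs.le] at hb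
    rw [show 1 + (k : ℝ) * (1 - α) - 1 = (k : ℝ) * (1 - α) by ring,
        show (1 - α) - 1 = -α by ring,
        show 1 + (k : ℝ) * (1 - α) + (1 - α) - 1 = ((k : ℝ) + 1) * (1 - α) by ring,
        show 1 + (k : ℝ) * (1 - α) + (1 - α) = 1 + ((k : ℝ) + 1) * (1 - α) by ring] at hb
    rw [← hb]
    exact setIntegral_congr_fun measurableSet_Ioc fun τ _ => mul_comm _ _
  -- integrability of each term
  have hint : ∀ k : ℕ, Integrable
      (fun τ => ((-1:ℝ) ^ k / Real.Gamma (1 + (k : ℝ) * (1 - α))) *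
        ((s - τ) ^ (-α) * τ ^ ((k : ℝ) * (1 - α))))
      (volume.restrict (Set.Ioc (0:ℝ) s)) := by
    intro k
    have h1 := integrand_intervalIntegrable (c := (k : ℝ) * (1 - α)) (hkν k) hν0 hs
    rw [show (1 - α) - 1 = -α by ring] at h1
    exact ((intervalIntegrable_iff_integrableOn_Ioc_of_le hs.le).1 h1).const_mul _
  -- value of the norm integrals
  have hnorm : ∀ k : ℕ, (∫ τ in Set.Ioc (0:ℝ) s,
        ‖((-1:ℝ) ^ k / Real.Gamma (1 + (k : ℝ) * (1 - α))) *
          ((s - τ) ^ (-α) * τ ^ ((k : ℝ) * (1 - α)))‖)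
      = (1 / Real.Gamma (1 + (k : ℝ) * (1 - α))) *
          (s ^ (((k : ℝ) + 1) * (1 - α)) * (Real.Gamma (1 + (k : ℝ) * (1 - α)) *
            Real.Gamma (1 - α) / Real.Gamma (1 + ((k : ℝ) + 1) * (1 - α)))) := by
    intro k
    have hcong : ∀ τ ∈ Set.Ioc (0:ℝ) s,
        ‖((-1:ℝ) ^ k / Real.Gamma (1 + (k : ℝ) * (1 - α))) *
          ((s - τ) ^ (-α) * τ ^ ((k : ℝ) * (1 - α)))‖
        = (1 / Real.Gamma (1 + (k : ℝ) * (1 - α))) *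
          ((s - τ) ^ (-α) * τ ^ ((k : ℝ) * (1 - α))) := by
      intro τ hτ
      rw [Real.norm_eq_abs, abs_mul, abs_div, abs_pow, abs_neg, abs_one, one_pow,
        abs_of_pos (hΓk k), abs_of_nonneg (mul_nonneg
          (Real.rpow_nonneg (by linarith [hτ.2]) _) (Real.rpow_nonneg hτ.1.le _))]
    rw [setIntegral_congr_fun measurableSet_Ioc hcong, integral_const_mul, hbeta k]
  -- summability of the norm integrals
  have hsum : Summable (fun k : ℕ => ∫ τ in Set.Ioc (0:ℝ) s,
      ‖((-1:ℝ) ^ k / Real.Gamma (1 + (k : ℝ) * (1 - α))) *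
        ((s - τ) ^ (-α) * τ ^ ((k : ℝ) * (1 - α)))‖) := by
    have h1 := ((summable_nat_add_iff 1).2 (ml_summable hν0 hν1 hs.le)).mul_left
      (Real.Gamma (1 - α))
    refine h1.congr fun k => ?_
    rw [hnorm k]
    have hA := (hΓk k).ne'
    have hB := (hΓk' k).ne'
    push_cast
    field_simp
  -- summability of the mlCos series at s
  have hsml : Summable (fun k : ℕ =>
      (-1:ℝ) ^ k * s ^ ((k : ℝ) * (1 - α)) / Real.Gamma (1 + (k : ℝ) * (1 - α))) := by
    apply Summable.of_norm
    refine (ml_summable hν0 hν1 hs.le).congr fun k => ?_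
    rw [Real.norm_eq_abs, abs_div, abs_mul, abs_pow, abs_neg, abs_one, one_pow, one_mul,
      abs_of_nonneg (Real.rpow_nonneg hs.le _), abs_of_pos (hΓk k)]
  -- the series form of `1 - mlCos α s`
  have hml : mlCos α s = 1 - ∑' k : ℕ, (-1:ℝ) ^ k *
      (s ^ (((k : ℝ) + 1) * (1 - α)) / Real.Gamma (1 + ((k : ℝ) + 1) * (1 - α))) := by
    have hterm : ∀ k : ℕ, (-1:ℝ) ^ (k + 1) * s ^ (((k + 1 : ℕ) : ℝ) * (1 - α)) /
          Real.Gamma (1 + ((k + 1 : ℕ) : ℝ) * (1 - α))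
        = -((-1:ℝ) ^ k * (s ^ (((k : ℝ) + 1) * (1 - α)) /
            Real.Gamma (1 + ((k : ℝ) + 1) * (1 - α)))) := by
      intro k; push_cast; ring
    simp only [mlCos]
    rw [Summable.tsum_eq_zero_add hsml, tsum_congr hterm, tsum_neg]
    norm_num [Real.Gamma_one, sub_eq_add_neg]
  calc (∫ τ in (0:ℝ)..s, (s - τ) ^ (-α) * mlCos α τ)
      = ∫ τ in Set.Ioc (0:ℝ) s, (s - τ) ^ (-α) * mlCos α τ :=
        intervalIntegral.integral_of_le hs.le
    _ = ∫ τ in Set.Ioc (0:ℝ) s, ∑' k : ℕ,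
          ((-1:ℝ) ^ k / Real.Gamma (1 + (k : ℝ) * (1 - α))) *
            ((s - τ) ^ (-α) * τ ^ ((k : ℝ) * (1 - α))) := by
        refine setIntegral_congr_fun measurableSet_Ioc fun τ _ => ?_
        simp only [mlCos]
        rw [← tsum_mul_left]
        exact tsum_congr fun k => by ring
    _ = ∑' k : ℕ, ∫ τ in Set.Ioc (0:ℝ) s,
          ((-1:ℝ) ^ k / Real.Gamma (1 + (k : ℝ) * (1 - α))) *
            ((s - τ) ^ (-α) * τ ^ ((k : ℝ) * (1 - α))) :=
        (integral_tsum_of_summable_integral_norm hint hsum).symm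
    _ = ∑' k : ℕ, Real.Gamma (1 - α) * ((-1:ℝ) ^ k *
          (s ^ (((k : ℝ) + 1) * (1 - α)) / Real.Gamma (1 + ((k : ℝ) + 1) * (1 - α)))) := by
        refine tsum_congr fun k => ?_
        rw [integral_const_mul, hbeta k]
        have hA := (hΓk k).ne'
        have hB := (hΓk' k).ne'
        field_simp
    _ = Real.Gamma (1 - α) * ∑' k : ℕ, (-1:ℝ) ^ k *
          (s ^ (((k : ℝ) + 1) * (1 - α)) / Real.Gamma (1 + ((k : ℝ) + 1) * (1 - α))) :=
        tsum_mul_left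
    _ = Real.Gamma (1 - α) * (1 - mlCos α s) := by rw [hml]; ring

theorem mlCos_solves_fractional_ode (α : ℝ) (hα0 : 0 < α) (hα1 : α < 1)
    (t : ℝ) (ht : 0 < t) :
    deriv (mlCos α) t =
      -((1 / Real.Gamma (1 - α)) *
        deriv (fun s => ∫ τ in (0:ℝ)..s, (s - τ) ^ (-α) * mlCos α τ) t) := by
  have hΓ : Real.Gamma (1 - α) ≠ 0 := (Real.Gamma_pos_of_pos (by linarith)).ne'
  have hev : (fun s => ∫ τ in (0:ℝ)..s, (s - τ) ^ (-α) * mlCos α τ) =ᶠ[nhds t]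
      fun s => Real.Gamma (1 - α) * (1 - mlCos α s) := by
    filter_upwards [eventually_gt_nhds ht] with s hs
    exact key_integral hα0 hα1 hs
  rw [Filter.EventuallyEq.deriv_eq hev, deriv_const_mul_field, deriv_const_sub]
  field_simp
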